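/- If the entropy inequality H(f(X)) ≤ Σ_{i=1}^n α_i H(f_i(X)) holds for every random variable X supported on a finite set A ⊆ 𝒳, where α_1,...,α_n are positive reals, then |f(A)| ≤ Π_{i=1}^n |f_i(A)|^{α_i}. -/

import Mathlib

attribute [local instance] Classical.propDecidable

open Real Finset ENNReal

/-- Shannon entropy of a discrete random variable with distribution `p`. -/
noncomputable def shannonEntropy {α : Type*} (p : PMF α) : ℝ :=
  ∑' a, Real.negMulLog ((p a).toReal)

lemma map_uniform_apply {𝒳 Z : Type*} (B : Finset 𝒳) (hB : B.Nonempty) (g : 𝒳 → Z) (z : Z) :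
    ((((PMF.uniformOfFinset B hB).map g) z).toReal)
      = ((B.filter (fun x => g x = z)).card : ℝ) / B.card := by
  classical
  rw [PMF.map_apply]
  have h1 : (∑' a, if z = g a then (PMF.uniformOfFinset B hB) a else 0)
      = ∑ a ∈ B, (if z = g a then ((B.card : ℝ≥0∞))⁻¹ else 0) := by
    rw [tsum_eq_sum (s := B)]
    · exact Finset.sum_congr rfl fun a ha => by
        simp [PMF.uniformOfFinset_apply, ha]
    · intro a ha
      simp [PMF.uniformOfFinset_apply, ha]
  rw [h1, ← Finset.sum_filter, Finset.sum_const]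
  have hcardne : (B.card : ℝ≥0∞) ≠ 0 := by
    simpa using hB.card_pos.ne'
  have : (B.filter (fun a => z = g a)) = (B.filter (fun a => g a = z)) := by
    apply Finset.filter_congr; intro x _; simp [eq_comm]
  rw [this]
  simp only [nsmul_eq_mul]
  rw [ENNReal.toReal_mul, ENNReal.toReal_inv]
  simp [div_eq_mul_inv]

lemma sum_fiber_card {𝒳 Z : Type*} (B : Finset 𝒳) (g : 𝒳 → Z) :
    ∑ z ∈ B.image g, ((B.filter (fun x => g x = z)).card : ℝ) = B.card := by
  classical
  rw [← Nat.cast_sum]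
  norm_cast
  exact (Finset.card_eq_sum_card_fiberwise (fun x hx => Finset.mem_image_of_mem g hx)).symm

lemma entropy_map_uniform_eq_sum {𝒳 Z : Type*} (B : Finset 𝒳) (hB : B.Nonempty) (g : 𝒳 → Z) :
    shannonEntropy ((PMF.uniformOfFinset B hB).map g)
      = ∑ z ∈ B.image g, Real.negMulLog (((B.filter (fun x => g x = z)).card : ℝ) / B.card) := by
  classical
  rw [shannonEntropy, tsum_eq_sum (s := B.image g)]
  · exact Finset.sum_congr rfl fun z _ => by rw [map_uniform_apply]
  · intro z hz
    rw [map_uniform_apply]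
    have : (B.filter (fun x => g x = z)) = ∅ := by
      ext x; simp only [Finset.mem_filter, Finset.notMem_empty, iff_false]
      rintro ⟨hx, rfl⟩
      exact hz (Finset.mem_image_of_mem g hx)
    simp [this]

lemma entropy_map_uniform_le {𝒳 Z : Type*} (B : Finset 𝒳) (hB : B.Nonempty) (g : 𝒳 → Z) :
    shannonEntropy ((PMF.uniformOfFinset B hB).map g) ≤ Real.log ((B.image g).card : ℝ) := by
  classical
  rw [entropy_map_uniform_eq_sum]
  set S := B.image g with hS
  set q : Z → ℝ := fun z => ((B.filter (fun x => g x = z)).card : ℝ) / B.card with hq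
  have hScard : (0 : ℝ) < S.card := by
    have : S.Nonempty := hB.image g
    exact_mod_cast this.card_pos
  have hBcard : (0 : ℝ) < B.card := by exact_mod_cast hB.card_pos
  have hqsum : ∑ z ∈ S, q z = 1 := by
    rw [hq]
    simp only [div_eq_mul_inv, ← Finset.sum_mul]
    rw [sum_fiber_card]
    field_simp
  have hqnonneg : ∀ z ∈ S, 0 ≤ q z := fun z _ => by positivity
  -- Jensen
  have hjensen := Real.concaveOn_negMulLog.le_map_sum
    (t := S) (w := fun _ => (S.card : ℝ)⁻¹) (p := q)
    (fun z _ => by positivity)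
    (by rw [Finset.sum_const, nsmul_eq_mul]; field_simp)
    (fun z hz => hqnonneg z hz)
  simp only [smul_eq_mul] at hjensen
  have hsum_inner : ∑ z ∈ S, (S.card : ℝ)⁻¹ * q z = (S.card : ℝ)⁻¹ := by
    rw [← Finset.mul_sum, hqsum, mul_one]
  rw [hsum_inner] at hjensen
  have hval : Real.negMulLog ((S.card : ℝ)⁻¹) = (S.card : ℝ)⁻¹ * Real.log S.card := by
    rw [Real.negMulLog, Real.log_inv]; ring
  rw [hval] at hjensen
  calc ∑ z ∈ S, Real.negMulLog (q z)
      = (S.card : ℝ) * ∑ z ∈ S, (S.card : ℝ)⁻¹ * Real.negMulLog (q z) := by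
        rw [← Finset.mul_sum, ← mul_assoc]; field_simp
    _ ≤ (S.card : ℝ) * ((S.card : ℝ)⁻¹ * Real.log S.card) := by
        apply mul_le_mul_of_nonneg_left hjensen hScard.le
    _ = Real.log S.card := by field_simp

lemma entropy_map_uniform_inj {𝒳 Z : Type*} (B : Finset 𝒳) (hB : B.Nonempty) (g : 𝒳 → Z)
    (hinj : Set.InjOn g ↑B) :
    shannonEntropy ((PMF.uniformOfFinset B hB).map g) = Real.log (B.card : ℝ) := by
  classical
  rw [entropy_map_uniform_eq_sum]
  have hBcard : (0 : ℝ) < B.card := by exact_mod_cast hB.card_pos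
  have hfib : ∀ z ∈ B.image g, (B.filter (fun x => g x = z)).card = 1 := by
    intro z hz
    obtain ⟨x, hx, rfl⟩ := Finset.mem_image.mp hz
    rw [Finset.card_eq_one]
    exact ⟨x, by
      ext y
      simp only [Finset.mem_filter, Finset.mem_singleton]
      constructor
      · rintro ⟨hy, hgy⟩; exact hinj hy hx hgy
      · rintro rfl; exact ⟨hx, rfl⟩⟩
  have hcardim : (B.image g).card = B.card := Finset.card_image_of_injOn hinj
  calc ∑ z ∈ B.image g, Real.negMulLog (((B.filter (fun x => g x = z)).card : ℝ) / B.card)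
      = ∑ z ∈ B.image g, Real.negMulLog ((B.card : ℝ))⁻¹ := by
        apply Finset.sum_congr rfl
        intro z hz; rw [hfib z hz]; norm_num
    _ = (B.card : ℝ) * Real.negMulLog ((B.card : ℝ))⁻¹ := by
        rw [Finset.sum_const, hcardim, nsmul_eq_mul]
    _ = Real.log (B.card : ℝ) := by
        rw [Real.negMulLog, Real.log_inv]; field_simp

theorem stmt7 {𝒳 Y : Type*} {n : ℕ} (f : 𝒳 → Y) (Yi : Fin n → Type*)
    (fi : ∀ i, 𝒳 → Yi i) (α : Fin n → ℝ) (hα : ∀ i, 0 < α i)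
    (A : Finset 𝒳)
    (hent : ∀ p : PMF 𝒳, p.support ⊆ ↑A →
      shannonEntropy (p.map f) ≤ ∑ i, α i * shannonEntropy (p.map (fi i))) :
    ((A.image f).card : ℝ) ≤ ∏ i, ((A.image (fi i)).card : ℝ) ^ (α i) := by
  classical
  rcases A.eq_empty_or_nonempty with rfl | hA
  · simp only [Finset.image_empty, Finset.card_empty, Nat.cast_zero]
    exact Finset.prod_nonneg fun i _ => Real.rpow_nonneg (by positivity) _
  -- transversal
  obtain ⟨x0, hx0⟩ := id hA
  set g : Y → 𝒳 := fun y => if h : ∃ x ∈ A, f x = y then h.choose else x0 with hg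
  have hg_mem : ∀ y ∈ A.image f, g y ∈ A ∧ f (g y) = y := by
    intro y hy
    obtain ⟨x, hx, rfl⟩ := Finset.mem_image.mp hy
    have h : ∃ x ∈ A, f x = f x := ⟨x, hx, rfl⟩
    rw [hg]
    simp only
    split_ifs with h'
    · exact ⟨h'.choose_spec.1, h'.choose_spec.2⟩
    · exact (h' ⟨x, hx, rfl⟩).elim
  set B : Finset 𝒳 := (A.image f).image g with hBdef
  have hB : B.Nonempty := (hA.image f).image g
  have hBsub : ↑B ⊆ (↑A : Set 𝒳) := by
    intro x hx
    obtain ⟨y, hy, rfl⟩ := Finset.mem_image.mp hx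
    exact (hg_mem y hy).1
  have hinj : Set.InjOn f ↑B := by
    intro a ha b hb hab
    obtain ⟨ya, hya, rfl⟩ := Finset.mem_image.mp ha
    obtain ⟨yb, hyb, rfl⟩ := Finset.mem_image.mp hb
    rw [(hg_mem ya hya).2, (hg_mem yb hyb).2] at hab
    rw [hab]
  have hBcard : B.card = (A.image f).card := by
    apply Finset.card_image_of_injOn
    intro a ha b hb hab
    have := congrArg f hab
    rwa [(hg_mem a ha).2, (hg_mem b hb).2] at this
  set p := PMF.uniformOfFinset B hB with hp
  have hsupp : p.support ⊆ ↑A := by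
    rw [hp, PMF.support_uniformOfFinset]; exact hBsub
  have hmain := hent p hsupp
  rw [entropy_map_uniform_inj B hB f hinj, hBcard] at hmain
  have hMpos : (0:ℝ) < (A.image f).card := by exact_mod_cast (hA.image f).card_pos
  have hMi_pos : ∀ i, (0:ℝ) < ((A.image (fi i)).card : ℝ) := fun i => by
    exact_mod_cast (hA.image (fi i)).card_pos
  have hbound : ∀ i, shannonEntropy (p.map (fi i)) ≤ Real.log ((A.image (fi i)).card : ℝ) := by
    intro i
    refine le_trans (entropy_map_uniform_le B hB (fi i)) ?_
    apply Real.log_le_log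
    · exact_mod_cast (hB.image (fi i)).card_pos
    · exact_mod_cast Finset.card_le_card (Finset.image_subset_image (by exact_mod_cast hBsub))
  have hlog : Real.log ((A.image f).card : ℝ) ≤ ∑ i, α i * Real.log ((A.image (fi i)).card : ℝ) := by
    refine hmain.trans (Finset.sum_le_sum fun i _ => ?_)
    exact mul_le_mul_of_nonneg_left (hbound i) (hα i).le
  calc ((A.image f).card : ℝ) = Real.exp (Real.log ((A.image f).card : ℝ)) := (Real.exp_log hMpos).symm
    _ ≤ Real.exp (∑ i, α i * Real.log ((A.image (fi i)).card : ℝ)) := Real.exp_le_exp.mpr hlog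
    _ = ∏ i, ((A.image (fi i)).card : ℝ) ^ (α i) := by
        rw [Real.exp_sum]
        exact Finset.prod_congr rfl fun i _ => by
          rw [mul_comm, Real.exp_mul, Real.exp_log (hMi_pos i)]
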